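/- Let F be a field, n ≥ 1, and let I be an ideal of F[X_1,...,X_n] containing X_i^{T_i} − 1 for positive integers T_1,...,T_n and each i = 1,...,n. Fix a monomial order on F[X_1,...,X_n], and let Δ(I) = { j ∈ ℕⁿ : X^j is not the leading monomial of any nonzero element of I }. Then Δ(I) is finite and the dimension of the quotient F[X_1,...,X_n]/I as an F-vector space equals |Δ(I)|. -/

import Mathlib

set_option synthInstance.maxHeartbeats 1000000
set_option maxHeartbeats 1000000

open MvPolynomial

/-- The Delta set of an ideal `I` with respect to a monomial order `mo`: the set of
exponent vectors `j` such that `X^j` is not the leading monomial of any nonzero element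
of `I`.  (Here `j` is the leading exponent of `f ≠ 0` iff `j` lies in the support of `f`
and dominates every element of the support of `f` in the order `mo`.) -/
def deltaSet {n : ℕ} {F : Type} [Field F] (mo : MonomialOrder (Fin n))
    (I : Ideal (MvPolynomial (Fin n) F)) : Set (Fin n →₀ ℕ) :=
  {j | ¬ ∃ f ∈ I, f ≠ 0 ∧ j ∈ f.support ∧ ∀ k ∈ f.support, mo.toSyn k ≤ mo.toSyn j}

namespace DeltaAux

variable {n : ℕ} {F : Type} [Field F] (mo : MonomialOrder (Fin n))
  (I : Ideal (MvPolynomial (Fin n) F))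

lemma support_monomial_one (j : Fin n →₀ ℕ) :
    (monomial j (1 : F)).support = {j} := by
  classical
  rw [support_monomial, if_neg one_ne_zero]

lemma exists_max (f : MvPolynomial (Fin n) F) (hf : f ≠ 0) :
    ∃ m ∈ f.support, ∀ k ∈ f.support, mo.toSyn k ≤ mo.toSyn m :=
  f.support.exists_max_image mo.toSyn (support_nonempty.mpr hf)

lemma max_not_mem_delta {f : MvPolynomial (Fin n) F} (hfI : f ∈ I) (hf : f ≠ 0)
    {m : Fin n →₀ ℕ} (hm : m ∈ f.support)
    (hmax : ∀ k ∈ f.support, mo.toSyn k ≤ mo.toSyn m) :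
    m ∉ deltaSet mo I := fun h => h ⟨f, hfI, hf, hm, hmax⟩

lemma eq_zero_of_support_subset_delta {f : MvPolynomial (Fin n) F} (hfI : f ∈ I)
    (hsupp : ↑f.support ⊆ deltaSet mo I) : f = 0 := by
  by_contra hf
  obtain ⟨m, hm, hmax⟩ := exists_max mo f hf
  exact max_not_mem_delta mo I hfI hf hm hmax (hsupp hm)

/-- The candidate spanning set. -/
def M : Set (MvPolynomial (Fin n) F) := (fun j => monomial j (1 : F)) '' deltaSet mo I

lemma span_sup_eq_top :
    Submodule.span F (M mo I) ⊔ I.restrictScalars F = ⊤ := by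
  rw [eq_top_iff]
  have H : ∀ d : mo.syn, ∀ f : MvPolynomial (Fin n) F,
      (∀ k ∈ f.support, mo.toSyn k ≤ d) →
      f ∈ Submodule.span F (M mo I) ⊔ I.restrictScalars F := by
    intro d
    induction d using WellFoundedLT.induction with
    | _ d IH =>
      intro f hf
      by_cases hf0 : f = 0
      · simp [hf0]
      obtain ⟨m, hm, hmax⟩ := exists_max mo f hf0
      have hmd : mo.toSyn m ≤ d := hf m hm
      by_cases hmΔ : m ∈ deltaSet mo I
      · -- subtract the leading monomial, which lies in the span
        set g : MvPolynomial (Fin n) F := f - monomial m (coeff m f) with hg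
        have hmonS : monomial m (coeff m f) ∈ Submodule.span F (M mo I) := by
          have h1 : monomial m (1 : F) ∈ Submodule.span F (M mo I) :=
            Submodule.subset_span ⟨m, hmΔ, rfl⟩
          have : monomial m (coeff m f) = coeff m f • monomial m (1 : F) := by
            rw [smul_monomial, smul_eq_mul, mul_one]
          rw [this]
          exact Submodule.smul_mem _ _ h1
        have hgsupp : ∀ k ∈ g.support, k ≠ m ∧ k ∈ f.support := by
          intro k hk
          rw [mem_support_iff, hg, coeff_sub, coeff_monomial] at hk
          by_cases hkm : k = m
          · subst hkm; simp at hk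
          · rw [if_neg (Ne.symm hkm), sub_zero] at hk
            exact ⟨hkm, mem_support_iff.mpr hk⟩
        have hglt : ∀ k ∈ g.support, mo.toSyn k < mo.toSyn m := by
          intro k hk
          obtain ⟨hkm, hkf⟩ := hgsupp k hk
          exact lt_of_le_of_ne (hmax k hkf)
            (fun h => hkm (mo.toSyn.injective h))
        have hgmem : g ∈ Submodule.span F (M mo I) ⊔ I.restrictScalars F := by
          by_cases hg0 : g = 0
          · simp [hg0]
          obtain ⟨m', hm', hmax'⟩ := exists_max mo g hg0
          exact IH (mo.toSyn m') (lt_of_lt_of_le (hglt m' hm') hmd) g hmax'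
        have : f = g + monomial m (coeff m f) := by rw [hg]; ring
        rw [this]
        exact add_mem hgmem (Submodule.mem_sup_left hmonS)
      · -- reduce by an element of the ideal with leading exponent m
        simp only [deltaSet, Set.mem_setOf_eq, not_not] at hmΔ
        obtain ⟨h, hhI, hh0, hmh, hmaxh⟩ := hmΔ
        have hch : coeff m h ≠ 0 := mem_support_iff.mp hmh
        set c : F := coeff m f * (coeff m h)⁻¹ with hc
        set g : MvPolynomial (Fin n) F := f - c • h with hg
        have hchmem : c • h ∈ I.restrictScalars F := by
          have : c • h = (C c : MvPolynomial (Fin n) F) * h := by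
            rw [smul_eq_C_mul]
          simp only [Submodule.restrictScalars_mem]
          rw [this]
          exact I.mul_mem_left _ hhI
        have hcm : coeff m g = 0 := by
          rw [hg, coeff_sub, coeff_smul, hc, smul_eq_mul,
            mul_assoc, inv_mul_cancel₀ hch, mul_one, sub_self]
        have hglt : ∀ k ∈ g.support, mo.toSyn k < mo.toSyn m := by
          intro k hk
          have hkm : k ≠ m := fun h' => by
            rw [h'] at hk; exact mem_support_iff.mp hk hcm
          have hkle : mo.toSyn k ≤ mo.toSyn m := by
            rw [mem_support_iff, hg, coeff_sub, coeff_smul] at hk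
            by_cases hkf : coeff k f ≠ 0
            · exact hmax k (mem_support_iff.mpr hkf)
            · push_neg at hkf
              have : coeff k h ≠ 0 := by
                intro h'
                rw [hkf, h', smul_zero, sub_zero] at hk
                exact hk rfl
              exact hmaxh k (mem_support_iff.mpr this)
          exact lt_of_le_of_ne hkle (fun h' => hkm (mo.toSyn.injective h'))
        have hgmem : g ∈ Submodule.span F (M mo I) ⊔ I.restrictScalars F := by
          by_cases hg0 : g = 0
          · simp [hg0]
          obtain ⟨m', hm', hmax'⟩ := exists_max mo g hg0
          exact IH (mo.toSyn m') (lt_of_lt_of_le (hglt m' hm') hmd) g hmax'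
        have : f = g + c • h := by rw [hg]; ring
        rw [this]
        exact add_mem hgmem (Submodule.mem_sup_right hchmem)
  intro f _
  by_cases hf0 : f = 0
  · simp [hf0]
  obtain ⟨m, hm, hmax⟩ := exists_max mo f hf0
  exact H (mo.toSyn m) f hmax

lemma support_subset_of_mem_span {f : MvPolynomial (Fin n) F}
    (hf : f ∈ Submodule.span F (M mo I)) : ↑f.support ⊆ deltaSet mo I := by
  induction hf using Submodule.span_induction with
  | mem x hx =>
      obtain ⟨j, hj, rfl⟩ := hx
      intro k hk
      rw [Finset.mem_coe, support_monomial_one, Finset.mem_singleton] at hk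
      rwa [hk]
  | zero => simp
  | add x y _ _ hx hy =>
      intro k hk
      rcases Finset.mem_union.mp (MvPolynomial.support_add hk) with h | h
      · exact hx h
      · exact hy h
  | smul c x _ hx =>
      intro k hk
      exact hx (MvPolynomial.support_smul hk)

lemma disjoint_span_ideal :
    Disjoint (Submodule.span F (M mo I)) (I.restrictScalars F) := by
  rw [Submodule.disjoint_def]
  intro f hfS hfI
  exact eq_zero_of_support_subset_delta mo I hfI (support_subset_of_mem_span mo I hfS)

lemma delta_subset_box (T : Fin n → ℕ) (hT : ∀ i, 0 < T i)
    (hI : ∀ i, (X i : MvPolynomial (Fin n) F) ^ T i - 1 ∈ I) :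
    deltaSet mo I ⊆ {j | ∀ i, j i < T i} := by
  intro j hj
  by_contra hbox
  simp only [Set.mem_setOf_eq, not_forall, not_lt] at hbox
  obtain ⟨i, hi⟩ := hbox
  set e : Fin n →₀ ℕ := Finsupp.single i (T i) with he
  have hej : e ≤ j := by
    intro i'
    rw [he, Finsupp.single_apply]
    split
    · next h => rw [← h]; exact hi
    · exact Nat.zero_le _
  set g : MvPolynomial (Fin n) F := monomial j 1 - monomial (j - e) 1 with hg
  have hgI : g ∈ I := by
    have key : g = monomial (j - e) 1 * ((X i : MvPolynomial (Fin n) F) ^ T i - 1) := by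
      rw [mul_sub, mul_one, X_pow_eq_monomial, monomial_mul, one_mul, ← he,
        tsub_add_cancel_of_le hej, hg]
    rw [key]
    exact I.mul_mem_left _ (hI i)
  have hjlt : (j - e) i < j i := by
    rw [Finsupp.tsub_apply, he, Finsupp.single_eq_same]
    exact Nat.sub_lt (lt_of_lt_of_le (hT i) hi) (hT i)
  have hjne : j - e ≠ j := by
    intro h'
    rw [h'] at hjlt
    exact lt_irrefl _ hjlt
  have hcj : coeff j g = 1 := by
    rw [hg, coeff_sub, coeff_monomial, if_pos rfl, coeff_monomial, if_neg hjne, sub_zero]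
  have hjsupp : j ∈ g.support := by
    rw [mem_support_iff, hcj]; exact one_ne_zero
  have hg0 : g ≠ 0 := fun h' => by simp [h'] at hcj
  have hmax : ∀ k ∈ g.support, mo.toSyn k ≤ mo.toSyn j := by
    intro k hk
    have hk' : k ∈ (monomial j (1:F)).support ∪ (monomial (j - e) (1:F)).support :=
      MvPolynomial.support_sub _ _ _ hk
    rw [support_monomial_one, support_monomial_one, Finset.mem_union,
      Finset.mem_singleton, Finset.mem_singleton] at hk'
    rcases hk' with rfl | rfl
    · exact le_rfl
    · exact mo.toSyn_monotone tsub_le_self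
  exact hj ⟨g, hgI, hg0, hjsupp, hmax⟩

lemma box_finite (T : Fin n → ℕ) : {j : Fin n →₀ ℕ | ∀ i, j i < T i}.Finite := by
  set b : Fin n →₀ ℕ := Finsupp.equivFunOnFinite.symm (fun i => T i - 1) with hb
  apply Set.Finite.subset (Set.finite_Icc 0 b)
  intro j hj
  refine ⟨zero_le, ?_⟩
  intro i
  have := hj i
  simp only [hb, Finsupp.coe_equivFunOnFinite_symm]
  omega

end DeltaAux

/-- If an ideal `I` of `F[X_1,…,X_n]` contains `X_i^{T_i} - 1` for positive integers
`T_1,…,T_n`, then for any monomial order its Delta set is finite and the dimension of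
`F[X_1,…,X_n]/I` over `F` equals the cardinality of the Delta set. -/
theorem statement_9 {n : ℕ} (hn : 1 ≤ n) {F : Type} [Field F]
    (I : Ideal (MvPolynomial (Fin n) F)) (T : Fin n → ℕ) (hT : ∀ i, 0 < T i)
    (hI : ∀ i, (X i : MvPolynomial (Fin n) F) ^ T i - 1 ∈ I)
    (mo : MonomialOrder (Fin n)) :
    (deltaSet mo I).Finite ∧
      Module.finrank F (MvPolynomial (Fin n) F ⧸ I) = (deltaSet mo I).ncard := by
  classical
  have hfin : (deltaSet mo I).Finite :=
    Set.Finite.subset (DeltaAux.box_finite T) (DeltaAux.delta_subset_box mo I T hT hI)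
  refine ⟨hfin, ?_⟩
  haveI : Fintype (deltaSet mo I) := hfin.fintype
  set π : MvPolynomial (Fin n) F →ₗ[F] MvPolynomial (Fin n) F ⧸ I :=
    (Ideal.Quotient.mkₐ F I).toLinearMap with hπ
  have hker : LinearMap.ker π = I.restrictScalars F := by
    ext x
    simp [hπ, Ideal.Quotient.eq_zero_iff_mem]
  set v : deltaSet mo I → MvPolynomial (Fin n) F ⧸ I :=
    fun j => π (monomial (j : Fin n →₀ ℕ) 1) with hv
  -- linear independence
  have hindep0 : LinearIndependent F
      (fun j : deltaSet mo I => monomial (j : Fin n →₀ ℕ) (1 : F)) := by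
    have hb := (MvPolynomial.basisMonomials (Fin n) F).linearIndependent
    have := hb.comp (Subtype.val : deltaSet mo I → (Fin n →₀ ℕ)) Subtype.val_injective
    rw [MvPolynomial.coe_basisMonomials] at this
    exact this
  have hrange : Set.range (fun j : deltaSet mo I => monomial (j : Fin n →₀ ℕ) (1 : F))
      = DeltaAux.M mo I := by
    rw [DeltaAux.M, Set.image_eq_range]
  have hindep : LinearIndependent F v := by
    have := hindep0.map (f := π) (by
      rw [hrange, hker]
      exact DeltaAux.disjoint_span_ideal mo I)
    exact this
  -- spanning
  have hspan : ⊤ ≤ Submodule.span F (Set.range v) := by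
    rintro x -
    obtain ⟨f, rfl⟩ := Ideal.Quotient.mk_surjective x
    have hf : f ∈ Submodule.span F (DeltaAux.M mo I) ⊔ I.restrictScalars F := by
      rw [DeltaAux.span_sup_eq_top]; trivial
    obtain ⟨s, hs, g, hg, rfl⟩ := Submodule.mem_sup.mp hf
    have h1 : Ideal.Quotient.mk I (s + g) = π s := by
      simp only [map_add, hπ, AlgHom.toLinearMap_apply, Ideal.Quotient.mkₐ_eq_mk]
      rw [Ideal.Quotient.eq_zero_iff_mem.mpr hg, add_zero]
    rw [h1]
    have h2 : π s ∈ Submodule.map π (Submodule.span F (DeltaAux.M mo I)) :=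
      ⟨s, hs, rfl⟩
    rw [Submodule.map_span] at h2
    have h3 : π '' DeltaAux.M mo I = Set.range v := by
      rw [DeltaAux.M, Set.image_image, Set.image_eq_range]
    rwa [h3] at h2
  let b : Module.Basis (deltaSet mo I) F (MvPolynomial (Fin n) F ⧸ I) := Module.Basis.mk hindep hspan
  rw [Module.finrank_eq_card_basis b, Set.ncard_eq_toFinset_card', Set.toFinset_card]
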